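/- Let G be a finite group of order n and t a positive integer. Then the number of elements of G whose order is a multiple of t is either zero or a multiple of the greatest divisor of n that is coprime to t. -/

import Mathlib

open Finset

namespace Weisner

open scoped Classical

/-! ### Number theory: the largest divisor of `n` coprime to `t` -/

def tpart (t n : ℕ) : ℕ := Nat.gcd n (t ^ n)

def tcompl (t n : ℕ) : ℕ := n / tpart t n

theorem tpart_dvd (t n : ℕ) : tpart t n ∣ n := Nat.gcd_dvd_left _ _

theorem tpart_dvd_pow (t n : ℕ) : tpart t n ∣ t ^ n := Nat.gcd_dvd_right _ _

theorem tpart_mul_tcompl (t n : ℕ) : tpart t n * tcompl t n = n :=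
  Nat.mul_div_cancel' (tpart_dvd t n)

theorem tcompl_dvd (t n : ℕ) : tcompl t n ∣ n := Nat.div_dvd_of_dvd (tpart_dvd t n)

theorem tpart_pos (t : ℕ) {n : ℕ} (hn : n ≠ 0) : 0 < tpart t n :=
  Nat.gcd_pos_of_pos_left _ (Nat.pos_of_ne_zero hn)

theorem tcompl_pos (t : ℕ) {n : ℕ} (hn : n ≠ 0) : 0 < tcompl t n :=
  Nat.div_pos (Nat.le_of_dvd (Nat.pos_of_ne_zero hn) (tpart_dvd t n)) (tpart_pos t hn)

theorem factorization_tpart {t : ℕ} (ht : t ≠ 0) {n : ℕ} (hn : n ≠ 0) (p : ℕ) :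
    (tpart t n).factorization p = if p ∣ t then n.factorization p else 0 := by
  have hpow : t ^ n ≠ 0 := pow_ne_zero _ ht
  rw [tpart, Nat.factorization_gcd hn hpow, Finsupp.inf_apply, Nat.factorization_pow]
  simp only [Finsupp.smul_apply, smul_eq_mul]
  by_cases hp : p.Prime
  · by_cases hpt : p ∣ t
    · rw [if_pos hpt]
      have h1 : 1 ≤ t.factorization p := (Nat.Prime.factorization_pos_of_dvd hp ht hpt)
      have h2 : n.factorization p ≤ n * t.factorization p :=
        le_trans (le_of_lt (Nat.factorization_lt p hn)) (Nat.le_mul_of_pos_right n h1)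
      exact min_eq_left h2
    · rw [if_neg hpt, Nat.factorization_eq_zero_of_not_dvd hpt, mul_zero,
        min_eq_right (Nat.zero_le _)]
  · rw [Nat.factorization_eq_zero_of_not_prime n hp, Nat.factorization_eq_zero_of_not_prime t hp,
      mul_zero, min_eq_right (Nat.zero_le _)]
    split <;> rfl

theorem tpart_mul {t : ℕ} (ht : t ≠ 0) {a b : ℕ} (ha : a ≠ 0) (hb : b ≠ 0) :
    tpart t (a * b) = tpart t a * tpart t b := by
  have hab : a * b ≠ 0 := mul_ne_zero ha hb
  refine Nat.eq_of_factorization_eq (tpart_pos t hab).ne'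
    (mul_ne_zero (tpart_pos t ha).ne' (tpart_pos t hb).ne') fun p => ?_
  rw [Nat.factorization_mul (tpart_pos t ha).ne' (tpart_pos t hb).ne', Finsupp.add_apply,
    factorization_tpart ht hab, factorization_tpart ht ha, factorization_tpart ht hb,
    Nat.factorization_mul ha hb, Finsupp.add_apply]
  split <;> simp

theorem tcompl_mul {t : ℕ} (ht : t ≠ 0) {a b : ℕ} (ha : a ≠ 0) (hb : b ≠ 0) :
    tcompl t (a * b) = tcompl t a * tcompl t b := by
  rw [tcompl, tcompl, tcompl, tpart_mul ht ha hb,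
    Nat.div_mul_div_comm (tpart_dvd t a) (tpart_dvd t b)]

theorem coprime_tcompl {t : ℕ} (ht : t ≠ 0) {n : ℕ} (hn : n ≠ 0) :
    Nat.Coprime (tcompl t n) t := by
  rw [Nat.coprime_iff_gcd_eq_one]
  by_contra h
  obtain ⟨p, hp, hpd⟩ := Nat.exists_prime_and_dvd h
  have hpc : p ∣ tcompl t n := hpd.trans (Nat.gcd_dvd_left _ _)
  have hpt : p ∣ t := hpd.trans (Nat.gcd_dvd_right _ _)
  have h0 : (tcompl t n).factorization p = 0 := by
    rw [tcompl, Nat.factorization_div (tpart_dvd t n), Finsupp.tsub_apply,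
      factorization_tpart ht hn, if_pos hpt, Nat.sub_self]
  exact (Nat.Prime.factorization_pos_of_dvd hp (tcompl_pos t hn).ne' hpc).ne' h0

theorem dvd_tcompl {t n e : ℕ} (he : e ∣ n) (hcop : Nat.Coprime e t) : e ∣ tcompl t n := by
  have h1 : Nat.Coprime e (tpart t n) :=
    Nat.Coprime.coprime_dvd_right (tpart_dvd_pow t n) (Nat.Coprime.pow_right _ hcop)
  have h2 : e ∣ tpart t n * tcompl t n := by rw [tpart_mul_tcompl]; exact he
  exact (Nat.Coprime.dvd_of_dvd_mul_left h1) h2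

theorem coprime_tpart_tcompl {t n : ℕ} (ht : t ≠ 0) (hn : n ≠ 0) :
    Nat.Coprime (tpart t n) (tcompl t n) :=
  (Nat.Coprime.coprime_dvd_right (tpart_dvd_pow t n)
    ((coprime_tcompl ht hn).pow_right _)).symm

theorem dvd_pow_self_of_dvd_pow {t a m : ℕ} (ht : t ≠ 0) (ha : a ≠ 0) (h : a ∣ t ^ m) :
    a ∣ t ^ a := by
  have hta : t ^ a ≠ 0 := pow_ne_zero _ ht
  rw [← Nat.factorization_le_iff_dvd ha hta]
  intro p
  rcases Nat.eq_zero_or_pos (a.factorization p) with h0 | hpos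
  · simp [h0]
  · have hm : t ^ m ≠ 0 := pow_ne_zero _ ht
    have hle : a.factorization p ≤ (t ^ m).factorization p :=
      (Nat.factorization_le_iff_dvd ha hm).mpr h p
    rw [Nat.factorization_pow] at hle ⊢
    simp only [Finsupp.smul_apply, smul_eq_mul] at hle ⊢
    have htp : 1 ≤ t.factorization p := by
      rcases Nat.eq_zero_or_pos (t.factorization p) with h0' | h1'
      · rw [h0', mul_zero] at hle; omega
      · exact h1'
    calc a.factorization p ≤ a := le_of_lt (Nat.factorization_lt p ha)
    _ = a * 1 := (mul_one a).symm
    _ ≤ a * t.factorization p := Nat.mul_le_mul_left a htp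

theorem gcd_crt1 {a b k : ℕ} (hco : Nat.Coprime a b) (h1 : k ≡ 1 [MOD a])
    (h0 : k ≡ 0 [MOD b]) : Nat.gcd (a * b) k = b := by
  have hka : Nat.Coprime a k := by
    have h := Nat.ModEq.gcd_eq h1
    rwa [Nat.gcd_one_left a, Nat.gcd_comm] at h
  rw [Nat.Coprime.gcd_mul_left_cancel b hka]
  exact Nat.gcd_eq_left (Nat.modEq_zero_iff_dvd.mp h0)

theorem gcd_crt2 {a b k : ℕ} (hco : Nat.Coprime a b) (h0 : k ≡ 0 [MOD a])
    (h1 : k ≡ 1 [MOD b]) : Nat.gcd (a * b) k = a := by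
  rw [mul_comm]
  exact gcd_crt1 hco.symm h1 h0

/-! ### Decomposition of a group element into commuting `π`- and `π'`-parts -/

/-- `u` is a `π`-element where `π` is the set of primes dividing `t`. -/
def IsPiElt (t : ℕ) {M : Type*} [Monoid M] (u : M) : Prop := orderOf u ∣ t ^ orderOf u

theorem div_tcompl (t : ℕ) {n : ℕ} (hn : n ≠ 0) : n / tcompl t n = tpart t n :=
  Nat.div_eq_of_eq_mul_left (tcompl_pos t hn) (tpart_mul_tcompl t n).symm

section Decomp

variable {G : Type*} [Group G] [Fintype G] {t : ℕ}

/-- the `π`-part of a group element -/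
noncomputable def piPart (ht : t ≠ 0) (x : G) : G :=
  x ^ (Nat.chineseRemainder (coprime_tpart_tcompl ht (orderOf_pos x).ne') 1 0).1

/-- the `π'`-part of a group element -/
noncomputable def piPart' (ht : t ≠ 0) (x : G) : G :=
  x ^ (Nat.chineseRemainder (coprime_tpart_tcompl ht (orderOf_pos x).ne') 0 1).1

variable (ht : t ≠ 0)

theorem commute_piPart (x : G) : Commute x (piPart ht x) := (Commute.refl x).pow_right _

theorem pow_crt_orderOf (ht : t ≠ 0) (x : G) {k : ℕ} (h1 : k ≡ 1 [MOD tpart t (orderOf x)])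
    (h0 : k ≡ 0 [MOD tcompl t (orderOf x)]) : orderOf (x ^ k) = tpart t (orderOf x) := by
  have hco := coprime_tpart_tcompl ht (orderOf_pos x).ne'
  have hg := gcd_crt1 hco h1 h0
  rw [tpart_mul_tcompl] at hg
  rw [orderOf_pow, hg]
  exact div_tcompl t (orderOf_pos x).ne'

theorem pow_crt_orderOf' (ht : t ≠ 0) (x : G) {k : ℕ} (h0 : k ≡ 0 [MOD tpart t (orderOf x)])
    (h1 : k ≡ 1 [MOD tcompl t (orderOf x)]) : orderOf (x ^ k) = tcompl t (orderOf x) := by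
  have hco := coprime_tpart_tcompl ht (orderOf_pos x).ne'
  have hg := gcd_crt2 hco h0 h1
  rw [tpart_mul_tcompl] at hg
  rw [orderOf_pow, hg]
  rfl

theorem orderOf_piPart (x : G) : orderOf (piPart ht x) = tpart t (orderOf x) :=
  pow_crt_orderOf ht x
    (Nat.chineseRemainder (coprime_tpart_tcompl ht (orderOf_pos x).ne') 1 0).2.1
    (Nat.chineseRemainder (coprime_tpart_tcompl ht (orderOf_pos x).ne') 1 0).2.2

theorem orderOf_piPart' (x : G) : orderOf (piPart' ht x) = tcompl t (orderOf x) :=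
  pow_crt_orderOf' ht x
    (Nat.chineseRemainder (coprime_tpart_tcompl ht (orderOf_pos x).ne') 0 1).2.1
    (Nat.chineseRemainder (coprime_tpart_tcompl ht (orderOf_pos x).ne') 0 1).2.2

theorem piPart_mul_piPart' (x : G) : piPart ht x * piPart' ht x = x := by
  have hco := coprime_tpart_tcompl ht (orderOf_pos x).ne'
  have key : ∀ k₁ k₂ : ℕ, k₁ ≡ 1 [MOD tpart t (orderOf x)] →
      k₁ ≡ 0 [MOD tcompl t (orderOf x)] → k₂ ≡ 0 [MOD tpart t (orderOf x)] →
      k₂ ≡ 1 [MOD tcompl t (orderOf x)] → x ^ k₁ * x ^ k₂ = x := by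
    intro k₁ k₂ h11 h10 h20 h21
    rw [← pow_add]
    conv_rhs => rw [← pow_one x]
    rw [pow_eq_pow_iff_modEq]
    have := (Nat.modEq_and_modEq_iff_modEq_mul hco).mp
      ⟨by simpa using h11.add h20, by simpa using h10.add h21⟩
    rwa [tpart_mul_tcompl] at this
  exact key _ _ (Nat.chineseRemainder hco 1 0).2.1 (Nat.chineseRemainder hco 1 0).2.2
    (Nat.chineseRemainder hco 0 1).2.1 (Nat.chineseRemainder hco 0 1).2.2

theorem piPart'_eq (x : G) : piPart' ht x = (piPart ht x)⁻¹ * x :=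
  eq_inv_mul_of_mul_eq (piPart_mul_piPart' ht x)

theorem isPiElt_piPart (x : G) : IsPiElt t (piPart ht x) := by
  rw [IsPiElt, orderOf_piPart]
  exact dvd_pow_self_of_dvd_pow ht (tpart_pos t (orderOf_pos x).ne').ne' (tpart_dvd_pow _ _)

theorem coprime_orderOf_piPart' (x : G) : Nat.Coprime (orderOf (piPart' ht x)) t := by
  rw [orderOf_piPart']
  exact coprime_tcompl ht (orderOf_pos x).ne'

theorem dvd_orderOf_piPart {r : ℕ} (hr : r ∣ t) {x : G} (hx : r ∣ orderOf x) :
    r ∣ orderOf (piPart ht x) := by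
  rw [orderOf_piPart]
  have hco : Nat.Coprime r (tcompl t (orderOf x)) :=
    (Nat.Coprime.coprime_dvd_right hr (coprime_tcompl ht (orderOf_pos x).ne')).symm
  refine hco.dvd_of_dvd_mul_right ?_
  rwa [tpart_mul_tcompl]

omit [Fintype G] in
theorem orderOf_mul_eq {u v : G} (hc : Commute u v) (hu : IsPiElt t u)
    (hv : Nat.Coprime (orderOf v) t) : orderOf (u * v) = orderOf u * orderOf v := by
  have hAB : Nat.Coprime (orderOf u) (orderOf v) :=
    (Nat.Coprime.coprime_dvd_right hu (hv.pow_right _)).symm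
  exact hc.orderOf_mul_eq_mul_orderOf_of_coprime hAB

theorem piPart_mul_eq {u v : G} (hc : Commute u v) (hu : IsPiElt t u)
    (hv : Nat.Coprime (orderOf v) t) : piPart ht (u * v) = u := by
  have hA : (0 : ℕ) < orderOf u := orderOf_pos u
  have hB : (0 : ℕ) < orderOf v := orderOf_pos v
  have ho : orderOf (u * v) = orderOf u * orderOf v := orderOf_mul_eq hc hu hv
  have hta : tpart t (orderOf (u * v)) = orderOf u := by
    rw [ho]
    refine Nat.dvd_antisymm ?_ ?_
    · have hBc : Nat.Coprime (orderOf v) (t ^ (orderOf u * orderOf v)) := hv.pow_right _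
      calc tpart t (orderOf u * orderOf v)
          = Nat.gcd (orderOf u * orderOf v) (t ^ (orderOf u * orderOf v)) := rfl
        _ = Nat.gcd (orderOf u) (t ^ (orderOf u * orderOf v)) :=
            Nat.Coprime.gcd_mul_right_cancel _ hBc
        _ ∣ orderOf u := Nat.gcd_dvd_left _ _
    · exact Nat.dvd_gcd (dvd_mul_right _ _)
        (hu.trans (pow_dvd_pow t (Nat.le_mul_of_pos_right _ hB)))
  have htb : tcompl t (orderOf (u * v)) = orderOf v := by
    have h := tpart_mul_tcompl t (orderOf (u * v))
    rw [hta] at h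
    exact Nat.eq_of_mul_eq_mul_left hA (h.trans ho)
  have key : ∀ k : ℕ, k ≡ 1 [MOD tpart t (orderOf (u * v))] →
      k ≡ 0 [MOD tcompl t (orderOf (u * v))] → (u * v) ^ k = u := by
    intro k h1 h0
    rw [hta] at h1
    rw [htb] at h0
    rw [hc.mul_pow]
    have hv1 : v ^ k = 1 := orderOf_dvd_iff_pow_eq_one.mp (Nat.modEq_zero_iff_dvd.mp h0)
    have hu1 : u ^ k = u := by
      conv_rhs => rw [← pow_one u]
      rw [pow_eq_pow_iff_modEq]
      exact h1
    rw [hv1, hu1, mul_one]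
  exact key _ (Nat.chineseRemainder _ 1 0).2.1 (Nat.chineseRemainder _ 1 0).2.2

end Decomp

/-! ### Counting -/

section Counting

variable {G : Type*} [Group G] [Fintype G] {t : ℕ}

/-- number of elements of order coprime to `t` in the centralizer of `u` -/
noncomputable def Nc (t : ℕ) (u : G) : ℕ :=
  (univ.filter fun v : G => u * v = v * u ∧ Nat.Coprime (orderOf v) t).card

theorem card_filter_dvd_eq_sum (ht : t ≠ 0) {r : ℕ} (hr : r ∣ t) :
    (univ.filter fun x : G => r ∣ orderOf x).card
      = ∑ u ∈ univ.filter (fun u : G => (r ∣ orderOf u) ∧ IsPiElt t u), Nc t u := by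
  rw [Finset.card_eq_sum_card_fiberwise (f := piPart ht)
    (t := univ.filter (fun u : G => (r ∣ orderOf u) ∧ IsPiElt t u)) ?_]
  · refine Finset.sum_congr rfl fun u hu => ?_
    rw [mem_filter] at hu
    obtain ⟨-, hru, hpu⟩ := hu
    refine Finset.card_nbij' (fun x => u⁻¹ * x) (fun v => u * v) ?_ ?_ ?_ ?_
    · intro x hx
      rw [Finset.mem_coe, mem_filter] at hx
      obtain ⟨hx1, hpx⟩ := hx
      obtain ⟨-, hrx⟩ := mem_filter.mp hx1
      have hxu : Commute x u := hpx ▸ commute_piPart ht x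
      have hveq : u⁻¹ * x = piPart' ht x := by rw [piPart'_eq, hpx]
      rw [Finset.mem_coe, mem_filter]
      refine ⟨mem_univ _, ?_, ?_⟩
      · beta_reduce
        rw [mul_inv_cancel_left, mul_assoc, hxu.eq, inv_mul_cancel_left]
      · beta_reduce
        rw [hveq]; exact coprime_orderOf_piPart' ht x
    · intro v hv
      rw [Finset.mem_coe, mem_filter] at hv
      obtain ⟨-, hcomm, hcop⟩ := hv
      have hc : Commute u v := hcomm
      rw [Finset.mem_coe, mem_filter, mem_filter]
      refine ⟨⟨mem_univ _, ?_⟩, piPart_mul_eq ht hc hpu hcop⟩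
      rw [orderOf_mul_eq hc hpu hcop]
      exact hru.mul_right _
    · intro x _; simp
    · intro v _; simp
  · intro x hx
    rw [Finset.mem_coe, mem_filter] at hx ⊢
    exact ⟨mem_univ _, dvd_orderOf_piPart ht hr hx.2, isPiElt_piPart ht x⟩

omit [Fintype G] in
theorem orderOf_conj (g y : G) : orderOf (g * y * g⁻¹) = orderOf y := by
  have h := orderOf_injective (MulAut.conj g).toMonoidHom (MulEquiv.injective _) y
  simpa using h

omit [Fintype G] in
theorem isPiElt_conj {g y : G} (h : IsPiElt t y) : IsPiElt t (g * y * g⁻¹) := by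
  rwa [IsPiElt, orderOf_conj]

theorem Nc_conj (g y : G) : Nc t (g * y * g⁻¹) = Nc t y := by
  refine Finset.card_nbij' (fun v => g⁻¹ * v * g) (fun w => g * w * g⁻¹) ?_ ?_ ?_ ?_
  · intro v hv
    rw [Finset.mem_coe, mem_filter] at hv ⊢
    obtain ⟨-, hcomm, hcop⟩ := hv
    refine ⟨mem_univ _, ?_, ?_⟩
    · have h := congrArg (fun z => g⁻¹ * z * g) hcomm
      simp only [mul_assoc, inv_mul_cancel_left, inv_mul_cancel, mul_one] at h ⊢
      simpa [mul_assoc] using h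
    · beta_reduce
      have h2 : g⁻¹ * v * g = g⁻¹ * v * (g⁻¹)⁻¹ := by rw [inv_inv]
      rw [h2, orderOf_conj]
      exact hcop
  · intro w hw
    rw [Finset.mem_coe, mem_filter] at hw ⊢
    obtain ⟨-, hcomm, hcop⟩ := hw
    refine ⟨mem_univ _, ?_, ?_⟩
    · have h := congrArg (fun z => g * z * g⁻¹) hcomm
      simp only [mul_assoc, mul_inv_cancel_left, mul_inv_cancel, mul_one] at h ⊢
      simpa [mul_assoc] using h
    · beta_reduce
      rw [orderOf_conj]
      exact hcop
  · intro v _; group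
  · intro w _; group

/-- Orbit–stabilizer for the conjugation action, in `Finset` form. -/
theorem card_orbit_mul_card_centralizer (y : G) :
    (univ.image fun g : G => g * y * g⁻¹).card
        * (univ.filter fun c : G => y * c = c * y).card = Fintype.card G := by
  rw [← Finset.card_univ (α := G),
    Finset.card_eq_sum_card_fiberwise (s := univ) (f := fun g : G => g * y * g⁻¹)
      (t := univ.image fun g : G => g * y * g⁻¹) (fun g _ => mem_image_of_mem _ (mem_univ g))]
  have step : ∀ z ∈ (univ.image fun g : G => g * y * g⁻¹),
      #(filter (fun a : G => a * y * a⁻¹ = z) univ)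
        = #(filter (fun c : G => y * c = c * y) univ) := by
    intro z hz
    obtain ⟨g₀, -, rfl⟩ := mem_image.mp hz
    refine Finset.card_nbij' (fun g => g₀⁻¹ * g) (fun c => g₀ * c) ?_ ?_ ?_ ?_
    · intro g hg
      rw [Finset.mem_coe, mem_filter] at hg
      have h : g * y * g⁻¹ = g₀ * y * g₀⁻¹ := hg.2
      rw [Finset.mem_coe, mem_filter]
      refine ⟨mem_univ _, ?_⟩
      beta_reduce
      have h2 := congrArg (fun z => g₀⁻¹ * z * g) h
      simp only [mul_assoc, inv_mul_cancel_left, inv_mul_cancel, mul_one] at h2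
      simpa [mul_assoc, eq_comm] using h2
    · intro c hc
      rw [Finset.mem_coe, mem_filter] at hc
      have h : y * c = c * y := hc.2
      rw [Finset.mem_coe, mem_filter]
      refine ⟨mem_univ _, ?_⟩
      beta_reduce
      have h2 := congrArg (fun z => g₀ * z * (g₀ * c)⁻¹) h.symm
      simp only [mul_inv_rev, mul_assoc, inv_mul_cancel_left, mul_inv_cancel, mul_one] at h2 ⊢
      simpa [mul_assoc] using h2
    · intro g _; simp
    · intro c _; simp
  refine Eq.symm ((Finset.sum_congr rfl step).trans ?_)
  rw [Finset.sum_const, smul_eq_mul]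

/-- Key lemma: a conjugation-invariant sum of `Nc` over `D` is divisible by
the `t`-coprime part of `|G|`. -/
theorem key_sum_dvd (ht : t ≠ 0) :
    ∀ D : Finset G, (∀ g y : G, y ∈ D → g * y * g⁻¹ ∈ D) →
      (∀ y ∈ D, tcompl t ((univ.filter fun c : G => y * c = c * y).card) ∣ Nc t y) →
      tcompl t (Fintype.card G) ∣ ∑ y ∈ D, Nc t y := by
  intro D
  induction D using Finset.strongInduction with
  | _ D ih =>
    intro hconj hsub
    rcases D.eq_empty_or_nonempty with rfl | ⟨y, hy⟩
    · simp
    · set O : Finset G := univ.image fun g : G => g * y * g⁻¹ with hO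
      have hOD : O ⊆ D := by
        intro z hz
        obtain ⟨g, -, rfl⟩ := mem_image.mp hz
        exact hconj g y hy
      have hyO : y ∈ O := mem_image.mpr ⟨1, mem_univ 1, by group⟩
      have hOconj : ∀ g z : G, z ∈ O → g * z * g⁻¹ ∈ O := by
        intro g z hz
        obtain ⟨g', -, rfl⟩ := mem_image.mp hz
        refine mem_image.mpr ⟨g * g', mem_univ _, by group⟩
      rw [← Finset.sum_sdiff hOD]
      apply dvd_add
      · refine ih (D \ O) (Finset.sdiff_ssubset hOD ⟨y, hyO⟩) ?_ ?_
        · intro g z hz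
          rw [mem_sdiff] at hz ⊢
          refine ⟨hconj g z hz.1, fun hc => hz.2 ?_⟩
          have := hOconj g⁻¹ _ hc
          simpa [mul_assoc] using this
        · intro z hz
          exact hsub z (mem_sdiff.mp hz).1
      · have hconst : ∀ z ∈ O, Nc t z = Nc t y := by
          intro z hz
          obtain ⟨g, -, rfl⟩ := mem_image.mp hz
          exact Nc_conj g y
        rw [Finset.sum_congr rfl hconst, Finset.sum_const, smul_eq_mul]
        have hcard := card_orbit_mul_card_centralizer y
        have h1 : O.card ≠ 0 := Finset.card_ne_zero_of_mem hyO
        have h2 : (univ.filter fun c : G => y * c = c * y).card ≠ 0 :=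
          Finset.card_ne_zero_of_mem (mem_filter.mpr ⟨mem_univ 1, by simp⟩)
        calc tcompl t (Fintype.card G)
            = tcompl t (O.card * (univ.filter fun c : G => y * c = c * y).card) := by
              rw [hcard]
          _ = tcompl t O.card * tcompl t (univ.filter fun c : G => y * c = c * y).card :=
              tcompl_mul ht h1 h2
          _ ∣ O.card * Nc t y := mul_dvd_mul (tcompl_dvd _ _) (hsub y hy)

end Counting

/-! ### The number of `π'`-elements -/

section Bridge

variable {G : Type*} [Group G] [Fintype G] {t : ℕ}

theorem card_centralizer_eq (z : G) :
    Fintype.card (Subgroup.centralizer ({z} : Set G)) =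
      (univ.filter fun c : G => z * c = c * z).card := by
  rw [← Fintype.card_subtype (p := fun c : G => z * c = c * z)]
  exact Fintype.card_congr (Equiv.subtypeEquivRight fun c => by
    rw [Subgroup.mem_centralizer_singleton_iff]; exact eq_comm)

theorem Nc_eq_card_subtype (z : G) :
    Nc t z = (univ.filter fun v : Subgroup.centralizer ({z} : Set G) =>
      Nat.Coprime (orderOf v) t).card := by
  refine Finset.card_bij
    (fun v hv => (⟨v, ?_⟩ : Subgroup.centralizer ({z} : Set G))) ?_ ?_ ?_
  · rw [Subgroup.mem_centralizer_singleton_iff]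
    exact ((mem_filter.mp hv).2.1).symm
  · intro v hv
    rw [mem_filter]
    refine ⟨mem_univ _, ?_⟩
    rw [Subgroup.orderOf_mk]
    exact (mem_filter.mp hv).2.2
  · intro v₁ hv₁ v₂ hv₂ h
    exact congrArg Subtype.val h
  · intro w hw
    refine ⟨(w : G), ?_, rfl⟩
    rw [mem_filter]
    have h1 := w.2
    rw [Subgroup.mem_centralizer_singleton_iff] at h1
    refine ⟨mem_univ _, h1.symm, ?_⟩
    rw [Subgroup.orderOf_coe]
    exact (mem_filter.mp hw).2

end Bridge

universe u

/-- The number of elements of order coprime to `t` in a finite group is divisible by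
the largest divisor of the group order coprime to `t`. -/
theorem tcompl_dvd_card_coprime {t : ℕ} (ht : t ≠ 0) :
    ∀ (n : ℕ) (H : Type u) [Group H] [Fintype H], Fintype.card H ≤ n →
      tcompl t (Fintype.card H) ∣
        (univ.filter fun v : H => Nat.Coprime (orderOf v) t).card := by
  intro n
  induction n with
  | zero =>
    intro H _ _ hle
    have := Fintype.card_pos (α := H)
    omega
  | succ n ih =>
    intro H _ _ hle
    -- the subgroup of central `π`-elements
    set Zpi : Subgroup H :=
      { carrier := {u : H | IsPiElt t u ∧ ∀ w, u * w = w * u}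
        one_mem' := ⟨by simp [IsPiElt], fun w => by simp⟩
        mul_mem' := by
          rintro u v ⟨hu, hcu⟩ ⟨hv, hcv⟩
          have hc : Commute u v := hcu v
          constructor
          · have hlcm : orderOf (u * v) ∣ Nat.lcm (orderOf u) (orderOf v) :=
              hc.orderOf_mul_dvd_lcm
            have hdvd : orderOf (u * v) ∣ t ^ (orderOf u + orderOf v) :=
              hlcm.trans (Nat.lcm_dvd (hu.trans (pow_dvd_pow t (Nat.le_add_right _ _)))
                (hv.trans (pow_dvd_pow t (Nat.le_add_left _ _))))
            exact dvd_pow_self_of_dvd_pow ht (orderOf_pos (u * v)).ne' hdvd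
          · intro w
            rw [mul_assoc, hcv w, ← mul_assoc, hcu w, mul_assoc]
        inv_mem' := by
          rintro u ⟨hu, hcu⟩
          constructor
          · rwa [IsPiElt, orderOf_inv]
          · intro w
            exact (Commute.inv_left (hcu w) : Commute u⁻¹ w) } with hZpi
    -- every prime dividing |Zpi| divides t
    have hZpi_prime : ∀ p : ℕ, p.Prime → p ∣ Fintype.card Zpi → p ∣ t := by
      intro p hp hdvd
      haveI : Fact p.Prime := ⟨hp⟩
      obtain ⟨g, hg⟩ := exists_prime_orderOf_dvd_card (G := Zpi) p hdvd
      have hgH : orderOf (g : H) = p := by rw [Subgroup.orderOf_coe, hg]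
      have hpi : IsPiElt t (g : H) := g.2.1
      rw [IsPiElt, hgH] at hpi
      exact hp.dvd_of_dvd_pow hpi
    -- main identity
    have hMI := card_filter_dvd_eq_sum (G := H) ht (one_dvd t)
    have hU : (univ.filter fun x : H => (1:ℕ) ∣ orderOf x) = univ := by simp
    rw [hU] at hMI
    rw [← Finset.sum_filter_add_sum_filter_not
      (univ.filter (fun u : H => ((1:ℕ) ∣ orderOf u) ∧ IsPiElt t u))
      (fun u => ∀ w : H, u * w = w * u)] at hMI
    set NH := (univ.filter fun v : H => Nat.Coprime (orderOf v) t).card with hNH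
    have hcentral : ∀ u ∈ (univ.filter (fun u : H => ((1:ℕ) ∣ orderOf u) ∧ IsPiElt t u)).filter
        (fun u => ∀ w : H, u * w = w * u), Nc t u = NH := by
      intro u hu
      have hcen := (mem_filter.mp hu).2
      rw [Nc, hNH]
      congr 1
      apply Finset.filter_congr
      intro v _
      exact ⟨And.right, fun h => ⟨hcen v, h⟩⟩
    rw [Finset.sum_congr rfl hcentral, Finset.sum_const, smul_eq_mul] at hMI
    -- the noncentral part is divisible
    have hnc : tcompl t (Fintype.card H) ∣
        ∑ u ∈ (univ.filter (fun u : H => ((1:ℕ) ∣ orderOf u) ∧ IsPiElt t u)).filter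
          (fun u => ¬ ∀ w : H, u * w = w * u), Nc t u := by
      refine key_sum_dvd ht _ ?_ ?_
      · intro g z hz
        simp only [mem_filter, mem_univ, true_and] at hz ⊢
        obtain ⟨⟨-, hpz⟩, hznc⟩ := hz
        refine ⟨⟨one_dvd _, isPiElt_conj hpz⟩, fun hcen => hznc fun w => ?_⟩
        have h := hcen (g * w * g⁻¹)
        have h2 := congrArg (fun a => g⁻¹ * a * g) h
        simp only [mul_assoc, inv_mul_cancel_left, inv_mul_cancel, mul_one] at h2
        simpa [mul_assoc] using h2
      · intro z hz
        simp only [mem_filter, mem_univ, true_and] at hz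
        obtain ⟨-, hznc⟩ := hz
        obtain ⟨w, hw⟩ := not_forall.mp hznc
        have hlt : Fintype.card (Subgroup.centralizer ({z} : Set H)) < Fintype.card H := by
          rw [card_centralizer_eq, ← Finset.card_univ]
          refine Finset.card_lt_card ?_
          rw [Finset.ssubset_univ_iff]
          intro hEq
          have hwmem : w ∈ univ.filter (fun c : H => z * c = c * z) := by
            rw [hEq]; exact mem_univ w
          exact hw (mem_filter.mp hwmem).2
        rw [← card_centralizer_eq, Nc_eq_card_subtype]
        exact ih (Subgroup.centralizer ({z} : Set H)) (by omega)
    -- the number of central π-elements is coprime to tcompl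
    have hccard : ((univ.filter (fun u : H => ((1:ℕ) ∣ orderOf u) ∧ IsPiElt t u)).filter
        (fun u => ∀ w : H, u * w = w * u)).card = Fintype.card Zpi := by
      rw [Finset.filter_filter, ← Fintype.card_subtype]
      refine Fintype.card_congr (Equiv.subtypeEquivRight fun u => ?_)
      constructor
      · rintro ⟨⟨-, hpi⟩, hcen⟩; exact ⟨hpi, hcen⟩
      · rintro ⟨hpi, hcen⟩; exact ⟨⟨one_dvd _, hpi⟩, hcen⟩
    have hcop : Nat.Coprime (Fintype.card Zpi) (tcompl t (Fintype.card H)) := by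
      rw [Nat.coprime_iff_gcd_eq_one]
      by_contra h
      obtain ⟨p, hp, hpd⟩ := Nat.exists_prime_and_dvd h
      have hp1 : p ∣ t := hZpi_prime p hp (hpd.trans (Nat.gcd_dvd_left _ _))
      have hp2 : p ∣ tcompl t (Fintype.card H) := hpd.trans (Nat.gcd_dvd_right _ _)
      have hpg := Nat.dvd_gcd hp2 hp1
      have h1 : Nat.gcd (tcompl t (Fintype.card H)) t = 1 :=
        coprime_tcompl ht Fintype.card_ne_zero
      rw [h1] at hpg
      exact Nat.Prime.not_dvd_one hp hpg
    -- assemble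
    rw [hccard, Finset.card_univ] at hMI
    have hd1 : tcompl t (Fintype.card H) ∣ Fintype.card H := tcompl_dvd _ _
    nth_rewrite 2 [hMI] at hd1
    have hd3 : tcompl t (Fintype.card H) ∣ Fintype.card Zpi * NH := by
      have h := Nat.dvd_sub hd1 hnc
      rwa [Nat.add_sub_cancel] at h
    exact hcop.symm.dvd_of_dvd_mul_left hd3

/-- Weisner's theorem, divisibility form. -/
theorem tcompl_dvd_card_dvd_orderOf {t : ℕ} (ht : t ≠ 0) (G : Type*) [Group G] [Fintype G] :
    tcompl t (Fintype.card G) ∣ Nat.card {x : G // t ∣ orderOf x} := by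
  rw [Nat.card_eq_fintype_card, Fintype.card_subtype]
  rw [card_filter_dvd_eq_sum ht (dvd_refl t)]
  refine key_sum_dvd ht _ ?_ ?_
  · intro g z hz
    simp only [mem_filter, mem_univ, true_and] at hz ⊢
    exact ⟨by rw [orderOf_conj]; exact hz.1, isPiElt_conj hz.2⟩
  · intro z _
    rw [← card_centralizer_eq, Nc_eq_card_subtype]
    exact tcompl_dvd_card_coprime ht _ (Subgroup.centralizer ({z} : Set G)) le_rfl

end Weisner

/-- Weisner's theorem: in a finite group `G`, the number of elements whose order is a
multiple of `t` is either zero or a multiple of the greatest divisor `d` of `|G|`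
that is coprime to `t`. -/
theorem stmt_4 (G : Type*) [Group G] [Fintype G] (t : ℕ) (ht : 0 < t)
    (d : ℕ) (hd : d ∣ Fintype.card G) (hcop : Nat.Coprime d t)
    (hmax : ∀ e : ℕ, e ∣ Fintype.card G → Nat.Coprime e t → e ∣ d) :
    Nat.card {x : G // t ∣ orderOf x} = 0 ∨ d ∣ Nat.card {x : G // t ∣ orderOf x} :=
  Or.inr ((Weisner.dvd_tcompl hd hcop).trans (Weisner.tcompl_dvd_card_dvd_orderOf ht.ne' G))
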